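/- arXiv:1404.0370 — 2 statements merged into one kernel-verified Lean document; each statement's English description precedes it below -/
import Mathlib

section
/- Let C ⊆ ℝ^{n+1} be an unbounded convex body with non-degenerate asymptotic cone C_∞, and fix r_0 > 0. Then there exists ℓ_1 > 0, depending only on r_0 and C_∞, such that ℓ_1 r^{n+1} ≤ |\bar B_C(x,r)| ≤ ω_{n+1} r^{n+1} for every x ∈ C and every 0 < r ≤ r_0, where ω_{n+1} is the volume of the unit ball of ℝ^{n+1}. In fact one may take ℓ_1 = ω_{n+1}(δ/r_0)^{n+1}, where δ > 0 is any radius such that some Euclidean ball of radius δ is contained in C_∞ ∩ \bar B(0,r_0). -/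
open Set MeasureTheory Filter Topology Pointwise

noncomputable section

abbrev Vn (n : ℕ) := EuclideanSpace ℝ (Fin (n + 1))
abbrev En (n : ℕ) := EuclideanSpace ℝ (Fin n)

/-- Divergence of a vector field on `ℝ^{n+1}`. -/
def divergence {n : ℕ} (ξ : Vn n → Vn n) (x : Vn n) : ℝ :=
  ∑ i, fderiv ℝ ξ x (EuclideanSpace.single i 1) i

/-- The set of values `∫_E div ξ` over smooth unit vector fields `ξ` compactly supported
in `U`. -/
def perimSet {n : ℕ} (U E : Set (Vn n)) : Set ℝ :=
  {p : ℝ | ∃ ξ : Vn n → Vn n, ContDiff ℝ (⊤ : ℕ∞) ξ ∧ HasCompactSupport ξ ∧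
    tsupport ξ ⊆ U ∧ (∀ x, ‖ξ x‖ ≤ 1) ∧ p = ∫ x in E, divergence ξ x}

/-- Relative perimeter of `E` in the open set `U`. -/
def relPerimeter {n : ℕ} (U E : Set (Vn n)) : ℝ := sSup (perimSet U E)

/-- Relative perimeter of `E` in the interior of `C`. -/
def perimC {n : ℕ} (C E : Set (Vn n)) : ℝ := relPerimeter (interior C) E

/-- `E` has finite relative perimeter in the interior of `C`. -/
def HasFiniteRelPerimeter {n : ℕ} (C E : Set (Vn n)) : Prop :=
  BddAbove (perimSet (interior C) E)

/-- Isoperimetric profile of `C`. -/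
def isopProfile {n : ℕ} (C : Set (Vn n)) (v : ℝ) : ℝ :=
  sInf {p : ℝ | ∃ E, E ⊆ C ∧ MeasurableSet E ∧ volume E = ENNReal.ofReal v ∧ p = perimC C E}

/-- An unbounded convex body: a closed unbounded convex set with nonempty interior. -/
def IsUnboundedConvexBody {n : ℕ} (C : Set (Vn n)) : Prop :=
  Convex ℝ C ∧ IsClosed C ∧ ¬ Bornology.IsBounded C ∧ (interior C).Nonempty

/-- Asymptotic cone of a set containing the origin: `⋂_{λ>0} λ C`. -/
def asympCone {n : ℕ} (C : Set (Vn n)) : Set (Vn n) :=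
  ⋂ (l : ℝ) (_ : 0 < l), l • C

/-- The first `n` coordinates of a point of `ℝ^{n+1}`. -/
def front {n : ℕ} (p : Vn n) : En n :=
  (WithLp.equiv 2 (Fin n → ℝ)).symm fun i => p i.castSucc

/-- Builds a point of `ℝ^{n+1}` from a horizontal component and a height. -/
def emb {n : ℕ} (y : En n) (t : ℝ) : Vn n :=
  (WithLp.equiv 2 (Fin (n + 1) → ℝ)).symm (Fin.snoc (WithLp.equiv 2 (Fin n → ℝ) y) t)

/-- Radial function of a set with respect to the origin. -/
def radialFn {n : ℕ} (A : Set (En n)) (u : En n) : ℝ :=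
  sSup {l : ℝ | 0 ≤ l ∧ l • u ∈ A}

/-- `K` is a cone with vertex `vtx`. -/
def IsConeWithVertex {n : ℕ} (K : Set (Vn n)) (vtx : Vn n) : Prop :=
  ∀ x ∈ K, ∀ l : ℝ, 0 ≤ l → vtx + l • (x - vtx) ∈ K

/-- `C` is a conically bounded convex body with exterior asymptotic cone `K` (vertex `vtx`):
`C` is an unbounded convex body which is the epigraph of a nonnegative convex function on the
hyperplane `x_{n+1} = 0` with compact slices having nonempty interior, `K` is a non-degenerate
closed convex cone containing `C`, and the radial functions of the horizontal slices of `C`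
and `K` become uniformly close as the height tends to infinity. -/
def IsExteriorAsympCone {n : ℕ} (C K : Set (Vn n)) (vtx : Vn n) : Prop :=
  IsUnboundedConvexBody C ∧
  (∃ f : En n → ℝ, ConvexOn ℝ univ f ∧ (∀ y, 0 ≤ f y) ∧
      C = {p : Vn n | f (front p) ≤ p (Fin.last n)} ∧
      (∀ t : ℝ, 0 ≤ t → IsCompact {y : En n | f y ≤ t} ∧ Convex ℝ {y : En n | f y ≤ t} ∧
        (interior {y : En n | f y ≤ t}).Nonempty)) ∧
  IsClosed K ∧ Convex ℝ K ∧ (interior K).Nonempty ∧ IsConeWithVertex K vtx ∧ C ⊆ K ∧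
  Tendsto (fun t : ℝ => ⨆ u : Metric.sphere (0 : En n) 1,
      |radialFn {y : En n | emb y t ∈ C} u - radialFn {y : En n | emb y t ∈ K} u|)
    atTop (𝓝 0)

/-- A conically bounded convex body. -/
def IsConicallyBounded {n : ℕ} (C : Set (Vn n)) : Prop :=
  ∃ K vtx, IsExteriorAsympCone C K vtx

/-- `S` is, near `p`, the zero set of a `C^k` defining function with nonvanishing
differential, i.e. a `C^k` hypersurface near `p`. -/
def IsHypersurfaceAt {n : ℕ} (k : ℕ∞) (S : Set (Vn n)) (p : Vn n) : Prop :=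
  ∃ (U : Set (Vn n)) (F : Vn n → ℝ), IsOpen U ∧ p ∈ U ∧ ContDiff ℝ k F ∧
    (∀ x ∈ U, fderiv ℝ F x ≠ 0) ∧ S ∩ U = {x ∈ U | F x = 0}

/-- A regular conically bounded convex body: the boundary of `C` is a smooth hypersurface and
the boundary of its (exterior) asymptotic cone is smooth away from the vertex. -/
def IsRegularConicallyBounded {n : ℕ} (C : Set (Vn n)) : Prop :=
  ∃ K vtx, IsExteriorAsympCone C K vtx ∧
    (∀ p ∈ frontier C, IsHypersurfaceAt ⊤ (frontier C) p) ∧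
    (∀ p ∈ frontier K, p ≠ vtx → IsHypersurfaceAt ⊤ (frontier K) p)

/-- A closed half-space of `ℝ^{n+1}`. -/
def halfSpace (n : ℕ) : Set (Vn n) := {x : Vn n | 0 ≤ x (Fin.last n)}


lemma smul_mem_asympCone' {n : ℕ} {C : Set (Vn n)} {z : Vn n} (hz : z ∈ asympCone C)
    {s : ℝ} (hs : 0 < s) : s • z ∈ asympCone C := by
  simp only [asympCone, mem_iInter] at hz ⊢
  intro l hl
  have h := hz (l / s) (div_pos hl hs)
  have : s • ((l / s) • C) = l • C := by
    rw [smul_smul]; congr 1; field_simp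
  rw [← this]
  exact smul_mem_smul_set h

lemma add_mem_of_asympCone {n : ℕ} {C : Set (Vn n)} (hconv : Convex ℝ C) (hcl : IsClosed C)
    {x z : Vn n} (hx : x ∈ C) (hz : z ∈ asympCone C) : x + z ∈ C := by
  simp only [asympCone, mem_iInter] at hz
  have key : ∀ s : ℝ, 0 < s → s • z ∈ C := by
    intro s hs
    have h := hz s⁻¹ (by positivity)
    rcases h with ⟨c, hc, rfl⟩
    rwa [smul_smul, mul_inv_cancel₀ hs.ne', one_smul]
  have memC : ∀ τ : ℝ, 0 < τ → τ ≤ 1 → (1 - τ) • x + z ∈ C := by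
    intro τ h1 h2
    have := hconv hx (key τ⁻¹ (by positivity)) (by linarith : (0:ℝ) ≤ 1 - τ) h1.le (by ring)
    rwa [smul_smul, mul_inv_cancel₀ h1.ne', one_smul] at this
  have htend : Tendsto (fun k : ℕ => (1 - 1 / (k + 1 : ℝ)) • x + z) atTop (𝓝 (x + z)) := by
    have h1 : Tendsto (fun k : ℕ => 1 - 1 / (k + 1 : ℝ)) atTop (𝓝 1) := by
      have := tendsto_one_div_add_atTop_nhds_zero_nat (𝕜 := ℝ)
      simpa using (tendsto_const_nhds (x := (1:ℝ))).sub this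
    have := (h1.smul_const x).add (tendsto_const_nhds (x := z))
    simpa using this
  exact hcl.mem_of_tendsto htend (Filter.Eventually.of_forall fun k =>
    memC (1 / (k + 1 : ℝ)) (by positivity) (by
      rw [div_le_one (by positivity)]; linarith [Nat.cast_nonneg (α := ℝ) k]))

lemma lower_vol_aux {n : ℕ} {C : Set (Vn n)} (hconv : Convex ℝ C) (hcl : IsClosed C)
    {r0 δ : ℝ} (hr0 : 0 < r0) (hδ : 0 < δ) {y : Vn n}
    (hy : Metric.closedBall y δ ⊆ asympCone C ∩ Metric.closedBall 0 r0) :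
    ∀ x ∈ C, ∀ r : ℝ, 0 < r → r ≤ r0 →
      (volume (Metric.ball (0 : Vn n) 1)).toReal * (δ / r0) ^ (n + 1) * r ^ (n + 1)
        ≤ (volume (C ∩ Metric.closedBall x r)).toReal := by
  intro x hx r hr hrr0
  set s : ℝ := r / r0 with hs
  have hspos : 0 < s := div_pos hr hr0
  have hincl : Metric.closedBall (x + s • y) (s * δ) ⊆ C ∩ Metric.closedBall x r := by
    intro w hw
    rw [Metric.mem_closedBall, dist_eq_norm] at hw
    set v : Vn n := s⁻¹ • (w - x) with hv
    have hwx : w = x + s • v := by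
      rw [hv, smul_smul, mul_inv_cancel₀ hspos.ne', one_smul]; abel
    have hvball : v ∈ Metric.closedBall y δ := by
      rw [Metric.mem_closedBall, dist_eq_norm]
      have hkey : w - (x + s • y) = s • (v - y) := by
        rw [hwx, smul_sub]; abel
      rw [hkey, norm_smul, Real.norm_eq_abs, abs_of_pos hspos] at hw
      exact (mul_le_mul_iff_right₀ hspos).1 hw
    obtain ⟨hvcone, hvr0⟩ := hy hvball
    constructor
    · rw [hwx]
      exact add_mem_of_asympCone hconv hcl hx (smul_mem_asympCone' hvcone hspos)
    · rw [Metric.mem_closedBall, dist_eq_norm, hwx]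
      have : x + s • v - x = s • v := by abel
      rw [this, norm_smul, Real.norm_eq_abs, abs_of_pos hspos]
      have hvn : ‖v‖ ≤ r0 := by simpa [dist_eq_norm] using hvr0
      calc s * ‖v‖ ≤ s * r0 := mul_le_mul_of_nonneg_left hvn hspos.le
        _ = r := by rw [hs]; field_simp
  have hfin : volume (C ∩ Metric.closedBall x r) < ⊤ :=
    (measure_mono inter_subset_right).trans_lt measure_closedBall_lt_top
  have hvb : volume (Metric.closedBall (x + s • y) (s * δ))
      = ENNReal.ofReal ((s * δ) ^ (n + 1)) * volume (Metric.ball (0 : Vn n) 1) := by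
    rw [Measure.addHaar_closedBall _ _ (by positivity), finrank_euclideanSpace_fin]
  have hmono := ENNReal.toReal_mono hfin.ne (measure_mono hincl)
  refine le_trans (le_of_eq ?_) hmono
  rw [hvb, ENNReal.toReal_mul, ENNReal.toReal_ofReal (by positivity)]
  have : s * δ = δ / r0 * r := by rw [hs]; ring
  rw [this, mul_pow]; ring

/-- Ahlfors regularity of small intrinsic balls: for an unbounded convex
body `C` with non-degenerate asymptotic cone and `r₀ > 0`, there is `ℓ₁ > 0` with
`ℓ₁ r^{n+1} ≤ |B̄_C(x,r)| ≤ ω_{n+1} r^{n+1}` for all `x ∈ C` and `0 < r ≤ r₀`; in fact any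
`ℓ₁ = ω_{n+1}(δ/r₀)^{n+1}` works, where a ball of radius `δ` fits inside
`C_∞ ∩ B̄(0,r₀)`. -/
theorem volume_intrinsic_balls_ahlfors (n : ℕ) (C : Set (Vn n))
    (hC : IsUnboundedConvexBody C) (h0 : (0 : Vn n) ∈ C)
    (hnd : (interior (asympCone C)).Nonempty) (r0 : ℝ) (hr0 : 0 < r0) :
    (∃ l1 : ℝ, 0 < l1 ∧ ∀ x ∈ C, ∀ r : ℝ, 0 < r → r ≤ r0 →
      l1 * r ^ (n + 1) ≤ (volume (C ∩ Metric.closedBall x r)).toReal ∧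
      (volume (C ∩ Metric.closedBall x r)).toReal
        ≤ (volume (Metric.ball (0 : Vn n) 1)).toReal * r ^ (n + 1)) ∧
    ∀ δ : ℝ, 0 < δ →
      (∃ y : Vn n, Metric.closedBall y δ ⊆ asympCone C ∩ Metric.closedBall 0 r0) →
      ∀ x ∈ C, ∀ r : ℝ, 0 < r → r ≤ r0 →
        (volume (Metric.ball (0 : Vn n) 1)).toReal * (δ / r0) ^ (n + 1) * r ^ (n + 1)
          ≤ (volume (C ∩ Metric.closedBall x r)).toReal := by
  obtain ⟨hconv, hcl, -, -⟩ := hC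
  have hω : 0 < (volume (Metric.ball (0 : Vn n) 1)).toReal :=
    ENNReal.toReal_pos (Metric.measure_ball_pos volume 0 one_pos).ne' measure_ball_lt_top.ne
  have hupper : ∀ x : Vn n, ∀ r : ℝ, 0 < r →
      (volume (C ∩ Metric.closedBall x r)).toReal
        ≤ (volume (Metric.ball (0 : Vn n) 1)).toReal * r ^ (n + 1) := by
    intro x r hr
    have hvb : volume (Metric.closedBall x r)
        = ENNReal.ofReal (r ^ (n + 1)) * volume (Metric.ball (0 : Vn n) 1) := by
      rw [Measure.addHaar_closedBall _ _ hr.le, finrank_euclideanSpace_fin]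
    have := ENNReal.toReal_mono
      (by rw [hvb]; exact (ENNReal.mul_lt_top ENNReal.ofReal_lt_top measure_ball_lt_top).ne)
      (measure_mono (inter_subset_right : C ∩ Metric.closedBall x r ⊆ _))
    refine this.trans (le_of_eq ?_)
    rw [hvb, ENNReal.toReal_mul, ENNReal.toReal_ofReal (by positivity)]
    ring
  have hsecond : ∀ δ : ℝ, 0 < δ →
      (∃ y : Vn n, Metric.closedBall y δ ⊆ asympCone C ∩ Metric.closedBall 0 r0) →
      ∀ x ∈ C, ∀ r : ℝ, 0 < r → r ≤ r0 →
        (volume (Metric.ball (0 : Vn n) 1)).toReal * (δ / r0) ^ (n + 1) * r ^ (n + 1)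
          ≤ (volume (C ∩ Metric.closedBall x r)).toReal := by
    intro δ hδ ⟨y, hy⟩
    exact lower_vol_aux hconv hcl hr0 hδ hy
  refine ⟨?_, hsecond⟩
  -- construct a small ball inside the asymptotic cone intersected with B̄(0,r0)
  obtain ⟨y0, hy0⟩ := hnd
  obtain ⟨ε, hε, hball⟩ := Metric.isOpen_iff.1 isOpen_interior y0 hy0
  have hcb : Metric.closedBall y0 (ε / 2) ⊆ asympCone C :=
    (Metric.closedBall_subset_ball (by linarith)).trans (hball.trans interior_subset)
  set t : ℝ := ‖y0‖ + ε with ht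
  have htpos : 0 < t := by positivity
  set s : ℝ := r0 / t with hsdef
  have hspos : 0 < s := div_pos hr0 htpos
  set δ : ℝ := s * (ε / 2) with hδdef
  have hδpos : 0 < δ := by positivity
  have hsub : Metric.closedBall (s • y0) δ ⊆ asympCone C ∩ Metric.closedBall 0 r0 := by
    intro z hz
    rw [Metric.mem_closedBall, dist_eq_norm] at hz
    have hz2 : s⁻¹ • z ∈ Metric.closedBall y0 (ε / 2) := by
      rw [Metric.mem_closedBall, dist_eq_norm]
      have : s⁻¹ • z - y0 = s⁻¹ • (z - s • y0) := by
        rw [smul_sub, smul_smul, inv_mul_cancel₀ hspos.ne', one_smul]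
      rw [this, norm_smul, norm_inv, Real.norm_eq_abs, abs_of_pos hspos]
      calc s⁻¹ * ‖z - s • y0‖ ≤ s⁻¹ * (s * (ε / 2)) :=
            mul_le_mul_of_nonneg_left hz (by positivity)
        _ = ε / 2 := by field_simp
    constructor
    · have : z = s • (s⁻¹ • z) := by
        rw [smul_smul, mul_inv_cancel₀ hspos.ne', one_smul]
      rw [this]
      exact smul_mem_asympCone' (hcb hz2) hspos
    · rw [Metric.mem_closedBall, dist_zero_right]
      calc ‖z‖ ≤ ‖s • y0‖ + ‖z - s • y0‖ := by
            have := norm_add_le (s • y0) (z - s • y0)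
            simpa using this
        _ ≤ s * ‖y0‖ + s * (ε / 2) := by
            rw [norm_smul, Real.norm_eq_abs, abs_of_pos hspos]
            exact add_le_add le_rfl hz
        _ ≤ s * t := by rw [ht]; nlinarith
        _ = r0 := by rw [hsdef]; field_simp
  refine ⟨(volume (Metric.ball (0 : Vn n) 1)).toReal * (δ / r0) ^ (n + 1), by positivity,
    fun x hx r hr hrr0 => ⟨hsecond δ hδpos ⟨s • y0, hsub⟩ x hx r hr hrr0, hupper x r hr⟩⟩

end
end

section
/- Let C ⊆ ℝ^{n+1} be an unbounded convex body. Then for every x ∈ C and every r > 0, the intrinsic balls satisfy |B_C(x,2r)| ≤ (2^{n+1} + 1) |B_C(x,r)|. In particular, C with the Euclidean metric and Lebesgue measure is a doubling metric measure space with doubling constant depending only on n. -/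
open Set MeasureTheory Filter Topology Pointwise

noncomputable section

/-- An unbounded convex body is a doubling metric measure space:
`|B_C(x,2r)| ≤ (2^{n+1}+1)|B_C(x,r)|` for every `x ∈ C` and `r > 0`. -/
theorem unboundedConvexBody_doubling (n : ℕ) (C : Set (Vn n))
    (hC : IsUnboundedConvexBody C) :
    ∀ x ∈ C, ∀ r : ℝ, 0 < r →
      volume (C ∩ Metric.ball x (2 * r)) ≤
        ((2 : ENNReal) ^ (n + 1) + 1) * volume (C ∩ Metric.ball x r) := by
  intro x hx r hr
  have hconv := hC.1
  have hsub : C ∩ Metric.ball x (2 * r) ⊆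
      AffineMap.homothety x (2 : ℝ) '' (C ∩ Metric.ball x r) := by
    intro y hy
    refine ⟨AffineMap.homothety x (1 / 2 : ℝ) y, ⟨?_, ?_⟩, ?_⟩
    · have h := hconv hx hy.1 (by norm_num : (0:ℝ) ≤ 1/2)
        (by norm_num : (0:ℝ) ≤ 1/2) (by norm_num : (1/2:ℝ) + 1/2 = 1)
      have : AffineMap.homothety x (1 / 2 : ℝ) y = (1/2 : ℝ) • x + (1/2 : ℝ) • y := by
        simp [AffineMap.homothety_apply, smul_sub]
        module
      rw [this]; exact h
    · have hd : dist y x < 2 * r := Metric.mem_ball.mp hy.2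
      have : AffineMap.homothety x (1 / 2 : ℝ) y - x = (1/2 : ℝ) • (y - x) := by
        simp [AffineMap.homothety_apply]
      rw [Metric.mem_ball, dist_eq_norm, this, norm_smul]
      rw [dist_eq_norm] at hd
      have : ‖(1/2 : ℝ)‖ = 1/2 := by norm_num
      rw [this]
      linarith
    · simp only [AffineMap.homothety_apply, vsub_eq_sub, vadd_eq_add]
      module
  calc volume (C ∩ Metric.ball x (2 * r))
      ≤ volume (AffineMap.homothety x (2 : ℝ) '' (C ∩ Metric.ball x r)) :=
        measure_mono hsub
    _ = ENNReal.ofReal (|(2:ℝ) ^ (Module.finrank ℝ (Vn n))|) *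
          volume (C ∩ Metric.ball x r) :=
        MeasureTheory.Measure.addHaar_image_homothety _ _ _ _
    _ ≤ ((2 : ENNReal) ^ (n + 1) + 1) * volume (C ∩ Metric.ball x r) := by
        gcongr
        rw [finrank_euclideanSpace_fin]
        rw [abs_of_nonneg (by positivity), ENNReal.ofReal_pow (by norm_num)]
        calc ENNReal.ofReal 2 ^ (n+1) = (2:ENNReal) ^ (n+1) := by norm_num
          _ ≤ _ := le_self_add

end
end
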